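/- arXiv:1811.02753 — 4 statements merged into one kernel-verified Lean document; each statement's English description precedes it below -/
import Mathlib

section
/- Let M be a ℤ-module with a symmetric bilinear form, let ℓ ∈ ℤ, and let σ ∈ M with σ·σ = 2ℓ. Then the ℤ-linear map E_σ : M × H → M × H determined by a ↦ a + σ - ℓa*, a* ↦ a*, and ξ ↦ ξ - (ξ·σ)a* for ξ ∈ M preserves the orthogonal direct sum form: E_σ(x)·E_σ(y) = x·y for all x, y ∈ M × H. -/
/-- For `σ ∈ M` with `σ·σ = 2ℓ`, Wall's elementary automorphism
`E_σ` of `M × H` (where `H = ℤ × ℤ` is the hyperbolic form with `a = (1,0)`,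
`a* = (0,1)`), determined by `a ↦ a + σ - ℓa*`, `a* ↦ a*`, `ξ ↦ ξ - (ξ·σ)a*`,
preserves the orthogonal direct sum form.  A general element `ξ + p·a + q·a*`
is written `(ξ, p, q)`, so `E_σ(ξ, p, q) = (ξ + pσ, p, q - ξ·σ - pℓ)`. -/
theorem elementary_automorphism_preserves_form
    (M : Type*) [AddCommGroup M] [Module ℤ M]
    (B : M →ₗ[ℤ] M →ₗ[ℤ] ℤ) (hB : ∀ x y : M, B x y = B y x)
    (ℓ : ℤ) (σ : M) (hσ : B σ σ = 2 * ℓ) :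
    let Q : M × ℤ × ℤ → M × ℤ × ℤ → ℤ :=
      fun x y => B x.1 y.1 + (x.2.1 * y.2.2 + x.2.2 * y.2.1)
    let E : M × ℤ × ℤ → M × ℤ × ℤ :=
      fun x => (x.1 + x.2.1 • σ, (x.2.1, x.2.2 - B x.1 σ - x.2.1 * ℓ))
    ∀ x y : M × ℤ × ℤ, Q (E x) (E y) = Q x y := by
  intro Q E x y
  have h1 : ∀ (c : ℤ) (v w : M), B (c • v) w = c * B v w := fun c v w => by
    simp [LinearMap.map_smul, LinearMap.smul_apply]
  have h2 : ∀ (c : ℤ) (v w : M), B v (c • w) = c * B v w := fun c v w => by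
    simp [LinearMap.map_smul, LinearMap.smul_apply]
  simp only [Q, E, map_add, LinearMap.add_apply, h1, h2]
  rw [hσ, hB σ y.1]; ring
end

section
/- Let M be a ℤ-module with a symmetric bilinear form, let ε ∈ {1, -1}, and let σ ∈ M with σ·σ = 2ε. Then the composition Φ = E_σ ∘ E*_{εσ} ∘ E_σ : M × H → M × H satisfies Φ(a*) = -εa; in particular Φ(a*)·a* = -ε, which is ±1. -/
/-- For `σ ∈ M` with `σ·σ = 2ε` (`ε = ±1`), the composition
`Φ = E_σ ∘ E*_{εσ} ∘ E_σ` on `M × H` (general element `ξ + p·a + q·a*` written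
`(ξ, p, q)`, so `a = (0,1,0)` and `a* = (0,0,1)`) satisfies `Φ(a*) = -ε·a`;
in particular `Φ(a*)·a* = -ε`, which is `±1`. -/
theorem composition_sends_astar_to_neg_eps_a
    (M : Type*) [AddCommGroup M] [Module ℤ M]
    (B : M →ₗ[ℤ] M →ₗ[ℤ] ℤ) (hB : ∀ x y : M, B x y = B y x)
    (ε : ℤ) (hε : ε = 1 ∨ ε = -1)
    (σ : M) (hσ : B σ σ = 2 * ε) :
    let Q : M × ℤ × ℤ → M × ℤ × ℤ → ℤ :=
      fun x y => B x.1 y.1 + (x.2.1 * y.2.2 + x.2.2 * y.2.1)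
    let E : M × ℤ × ℤ → M × ℤ × ℤ :=
      fun x => (x.1 + x.2.1 • σ, (x.2.1, x.2.2 - B x.1 σ - x.2.1 * ε))
    let Estar : M × ℤ × ℤ → M × ℤ × ℤ :=
      fun x => (x.1 + (x.2.2 * ε) • σ, (x.2.1 - ε * B x.1 σ - x.2.2 * ε, x.2.2))
    let Φ : M × ℤ × ℤ → M × ℤ × ℤ := E ∘ Estar ∘ E
    let astar : M × ℤ × ℤ := ((0 : M), ((0 : ℤ), (1 : ℤ)))
    Φ astar = ((0 : M), (-ε, (0 : ℤ))) ∧ Q (Φ astar) astar = -ε ∧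
      (-ε = 1 ∨ -ε = -1) := by
  intro Q E Estar Φ astar
  rcases hε with h | h <;> subst h <;>
    refine ⟨?_, ?_, by norm_num⟩ <;>
    simp [Φ, E, Estar, astar, Q, hσ, map_smul, map_zsmul]
end

section
/- Let M be a ℤ-module with a symmetric bilinear form, let ε ∈ {1, -1}, and let σ ∈ M with σ·σ = 2ε. Then the composition Φ = E_σ ∘ E*_{εσ} ∘ E_σ : M × H → M × H satisfies, for every ξ ∈ M (viewed as (ξ,0) ∈ M × H), Φ(ξ) = ξ - ε(ξ·σ)σ; that is, Φ restricted to M equals the reflection ρ_σ. -/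
/-- For `σ ∈ M` with `σ·σ = 2ε` (`ε = ±1`), the composition
`Φ = E_σ ∘ E*_{εσ} ∘ E_σ` on `M × H` (general element `ξ + p·a + q·a*` written
`(ξ, p, q)`) satisfies `Φ(ξ) = ξ - ε(ξ·σ)σ` for every `ξ ∈ M`, i.e. `Φ`
restricted to `M` equals the reflection `ρ_σ`. -/
theorem composition_restricts_to_reflection
    (M : Type*) [AddCommGroup M] [Module ℤ M]
    (B : M →ₗ[ℤ] M →ₗ[ℤ] ℤ) (hB : ∀ x y : M, B x y = B y x)
    (ε : ℤ) (hε : ε = 1 ∨ ε = -1)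
    (σ : M) (hσ : B σ σ = 2 * ε) :
    let E : M × ℤ × ℤ → M × ℤ × ℤ :=
      fun x => (x.1 + x.2.1 • σ, (x.2.1, x.2.2 - B x.1 σ - x.2.1 * ε))
    let Estar : M × ℤ × ℤ → M × ℤ × ℤ :=
      fun x => (x.1 + (x.2.2 * ε) • σ, (x.2.1 - ε * B x.1 σ - x.2.2 * ε, x.2.2))
    let Φ : M × ℤ × ℤ → M × ℤ × ℤ := E ∘ Estar ∘ E
    ∀ ξ : M, Φ (ξ, ((0 : ℤ), (0 : ℤ))) = (ξ - (ε * B ξ σ) • σ, ((0 : ℤ), (0 : ℤ))) := by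
  intro E Estar Φ ξ
  have hε2 : ε * ε = 1 := by rcases hε with h | h <;> simp [h]
  have key : ∀ c : ℤ, B (c • σ) σ = c * (2 * ε) := fun c => by
    rw [map_zsmul, LinearMap.smul_apply, smul_eq_mul, hσ]
  simp only [Φ, E, Estar, Function.comp]
  simp only [zero_zsmul, add_zero, map_add, LinearMap.add_apply, map_zero,
    LinearMap.zero_apply, key, Prod.mk.injEq]
  refine ⟨?_, by ring, by ring_nf; rw [show ε^2 = 1 from by rw [pow_two, hε2]]; ring⟩
  rw [show ((0 - B ξ σ - 0 * ε) * ε) = -(ε * B ξ σ) from by ring]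
  rw [show (0 - ε * B ξ σ - -(ε * B ξ σ)) = 0 from by ring]
  rw [zero_zsmul, add_zero, neg_zsmul, ← sub_eq_add_neg]
end

section
/- Let M be a ℤ-module with a symmetric bilinear form B, and let y ∈ M be characteristic with y·y = k where k ≥ -1. Equip M × ℤ^{k+1} with the orthogonal direct sum of B and the negative-definite diagonal form on ℤ^{k+1}. Then the element y' = (y, -Σ_{i=1}^{k+1} eᵢ) is characteristic for the direct sum form and satisfies y'·y' = -1. -/
/-- Let `y ∈ M` be characteristic for `B` with `y·y = k`,
`k ≥ -1`.  On `M × ℤ^{k+1}` (with `ℤ^{k+1}` realized as `Fin n → ℤ` where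
`(n : ℤ) = k + 1`), equipped with the orthogonal direct sum of `B` and the
negative-definite diagonal form, the element `y' = (y, -∑_{i=1}^{k+1} eᵢ)` is
characteristic and satisfies `y'·y' = -1`. -/
theorem stabilized_characteristic_class_square_neg_one
    (M : Type*) [AddCommGroup M] [Module ℤ M]
    (B : M →ₗ[ℤ] M →ₗ[ℤ] ℤ) (hB : ∀ x y : M, B x y = B y x)
    (k : ℤ) (hk : -1 ≤ k)
    (y : M) (hy : ∀ x : M, B y x ≡ B x x [ZMOD 2]) (hyy : B y y = k)
    (n : ℕ) (hn : (n : ℤ) = k + 1) :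
    let Q : M × (Fin n → ℤ) → M × (Fin n → ℤ) → ℤ :=
      fun u v => B u.1 v.1 + -∑ i : Fin n, u.2 i * v.2 i
    let y' : M × (Fin n → ℤ) := (y, fun _ => -1)
    (∀ x : M × (Fin n → ℤ), Q y' x ≡ Q x x [ZMOD 2]) ∧ Q y' y' = -1 := by
  intro Q y'
  constructor
  · intro x
    have h1 : B y x.1 ≡ B x.1 x.1 [ZMOD 2] := hy x.1
    have h2' : (∑ i : Fin n, (-1 : ℤ) * x.2 i) ≡ ∑ i : Fin n, x.2 i * x.2 i [ZMOD 2] := by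
      rw [Int.modEq_comm, Int.modEq_iff_dvd, ← Finset.sum_sub_distrib]
      refine Finset.dvd_sum fun i _ => ?_
      rcases Int.even_or_odd (x.2 i) with ⟨c, hc⟩ | ⟨c, hc⟩
      · exact ⟨-(2 * c * c + c), by rw [hc]; ring⟩
      · exact ⟨-(2 * c * c + 3 * c + 1), by rw [hc]; ring⟩
    have := h1.add h2'.neg
    simpa [Q, y'] using this
  · have hsum : (∑ i : Fin n, ((-1 : ℤ)) * (-1 : ℤ)) = (n : ℤ) := by simp
    simp only [Q, y', hyy, hsum]
    omega
end
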